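/- Let k be a natural number. The map which sends a set U ⊆ V to the function f_U : V → Bool × Bool defined by f_U(v) := (decide(v ∈ U), decide(v ∈ N⁺[U])) is a bijection from { U ⊆ V : |U| ≤ k } onto Sol_k. -/

import Mathlib

/-- The closed neighbourhood `N⁺[v] = {v} ∪ N(v)` of a vertex. -/
def closedNbhd {V : Type*} [Fintype V] [DecidableEq V]
    (G : SimpleGraph V) [DecidableRel G.Adj] (v : V) : Finset V :=
  insert v (G.neighborFinset v)

/-- The closed neighbourhood `N⁺[U] = ⋃_{u ∈ U} N⁺[u]` of a set of vertices. -/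
def closedNbhdSet {V : Type*} [Fintype V] [DecidableEq V]
    (G : SimpleGraph V) [DecidableRel G.Adj] (U : Finset V) : Finset V :=
  U.biUnion (closedNbhd G)

/-- Semantic solution set of the CNF encoding `F_k`. -/
def SolSet {V : Type*} [Fintype V] [DecidableEq V]
    (G : SimpleGraph V) [DecidableRel G.Adj] (k : ℕ) : Set (V → Bool × Bool) :=
  {f | (Finset.univ.filter (fun v => (f v).1 = true)).card ≤ k ∧
       ∀ v : V, (f v).2 = true ↔ ∃ u ∈ closedNbhd G v, (f u).1 = true}

lemma mem_closedNbhd_comm {V : Type*} [Fintype V] [DecidableEq V]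
    (G : SimpleGraph V) [DecidableRel G.Adj] (u v : V) :
    u ∈ closedNbhd G v ↔ v ∈ closedNbhd G u := by
  simp [closedNbhd, eq_comm, G.adj_comm]

lemma mem_closedNbhdSet_iff {V : Type*} [Fintype V] [DecidableEq V]
    (G : SimpleGraph V) [DecidableRel G.Adj] (U : Finset V) (v : V) :
    v ∈ closedNbhdSet G U ↔ ∃ u ∈ closedNbhd G v, u ∈ U := by
  simp only [closedNbhdSet, Finset.mem_biUnion]
  constructor
  · rintro ⟨u, hu, hv⟩
    exact ⟨u, (mem_closedNbhd_comm G u v).mpr hv, hu⟩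
  · rintro ⟨u, hv, hu⟩
    exact ⟨u, hu, (mem_closedNbhd_comm G u v).mp hv⟩

theorem subsets_bij_solset {V : Type*} [Fintype V] [DecidableEq V]
    (G : SimpleGraph V) [DecidableRel G.Adj] (k : ℕ) :
    Set.BijOn
      (fun U : Finset V => fun v : V =>
        (decide (v ∈ U), decide (v ∈ closedNbhdSet G U)))
      {U : Finset V | U.card ≤ k} (SolSet G k) := by
  refine ⟨?_, ?_, ?_⟩
  · intro U hU
    refine ⟨?_, fun v => ?_⟩
    · have h : (Finset.univ.filter (fun v : V => decide (v ∈ U) = true)) = U :=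
        Finset.ext (fun v => by simp)
      simpa only [h, Set.mem_setOf_eq] using hU
    · simp only [decide_eq_true_eq]
      rw [mem_closedNbhdSet_iff]
  · intro U _ W _ h
    ext v
    have := congrArg (fun f => (f v).1) h
    simpa using this
  · intro f hf
    obtain ⟨hcard, hnb⟩ := hf
    refine ⟨Finset.univ.filter (fun v => (f v).1 = true), hcard, ?_⟩
    funext v
    refine Prod.ext (by simp) ?_
    show decide (v ∈ closedNbhdSet G _) = (f v).2
    rcases h2 : (f v).2 with _ | _
    · refine decide_eq_false fun hmem => ?_
      obtain ⟨u, hu, hfu⟩ := (mem_closedNbhdSet_iff G _ v).mp hmem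
      have : (f v).2 = true := (hnb v).mpr ⟨u, hu, (Finset.mem_filter.mp hfu).2⟩
      rw [h2] at this; exact Bool.false_ne_true this
    · obtain ⟨u, hu, hfu⟩ := (hnb v).mp h2
      exact decide_eq_true ((mem_closedNbhdSet_iff G _ v).mpr
        ⟨u, hu, Finset.mem_filter.mpr ⟨Finset.mem_univ u, hfu⟩⟩)
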